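/- arXiv:2205.10500 — 2 statements merged into one kernel-verified Lean document; each statement's English description precedes it below -/
import Mathlib

section
/- For any X, W ∈ ℝ^{n×p}, ⟨J_A(X)[W], X(X^T X - I_p)⟩ = (15/8) ⟨Φ(X^T W), (X^T X - I_p)^3⟩, where J_A(X)[W] = (1/8) W (15 I_p - 10 X^T X + 3 (X^T X)^2) - X Φ(X^T W) + (3/2) X Φ(Φ(X^T W)(X^T X - I_p)) and Φ(M) = (M + M^T)/2. -/
open Matrix

/-- The symmetrization operator `Φ(M) = (M + Mᵀ)/2`. -/
noncomputable def symPart {p : ℕ} (M : Matrix (Fin p) (Fin p) ℝ) : Matrix (Fin p) (Fin p) ℝ :=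
  (1 / 2 : ℝ) • (M + Mᵀ)

/-- The Jacobian of the constraint dissolving mapping at `X` applied to `W`. -/
noncomputable def cdJac {n p : ℕ} (X W : Matrix (Fin n) (Fin p) ℝ) :
    Matrix (Fin n) (Fin p) ℝ :=
  (1 / 8 : ℝ) • (W * ((15 : ℝ) • (1 : Matrix (Fin p) (Fin p) ℝ)
      - (10 : ℝ) • (Xᵀ * X) + (3 : ℝ) • (Xᵀ * X) ^ 2))
    - X * symPart (Xᵀ * W)
    + (3 / 2 : ℝ) • (X * symPart (symPart (Xᵀ * W) * (Xᵀ * X - 1)))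

theorem stmt_10 {n p : ℕ} (X W : Matrix (Fin n) (Fin p) ℝ) :
    Matrix.trace ((cdJac X W)ᵀ * (X * (Xᵀ * X - 1))) =
      (15 / 8 : ℝ) * Matrix.trace ((symPart (Xᵀ * W))ᵀ * (Xᵀ * X - 1) ^ 3) := by
  simp only [cdJac, symPart, pow_succ, pow_zero, one_mul, transpose_add, transpose_sub,
    transpose_smul, transpose_mul, transpose_transpose, transpose_one, Matrix.add_mul,
    Matrix.sub_mul, Matrix.mul_add, Matrix.mul_sub, Matrix.smul_mul, Matrix.mul_smul,
    Matrix.mul_one, Matrix.one_mul, trace_add, trace_sub, trace_smul, smul_eq_mul,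
    smul_add, smul_sub, mul_assoc]
  have rot : ∀ A B : Matrix (Fin p) (Fin p) ℝ, Matrix.trace (A * B) = Matrix.trace (B * A) :=
    fun A B => trace_mul_comm A B
  have a1 : Matrix.trace (Wᵀ * (X * (Xᵀ * X)))
      = Matrix.trace (Wᵀ * X * (Xᵀ * X)) := by congr 1; simp only [Matrix.mul_assoc]
  have a2 : Matrix.trace (Xᵀ * X * Wᵀ * (X * (Xᵀ * X)))
      = Matrix.trace (Wᵀ * X * (Xᵀ * X * (Xᵀ * X))) := by
    rw [show (Xᵀ * X * Wᵀ * (X * (Xᵀ * X)) : Matrix (Fin p) (Fin p) ℝ)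
      = (Xᵀ * X) * (Wᵀ * (X * (Xᵀ * X))) by simp only [Matrix.mul_assoc], rot]
    congr 1; simp only [Matrix.mul_assoc]
  have a3 : Matrix.trace (Xᵀ * X * (Xᵀ * X) * Wᵀ * (X * (Xᵀ * X)))
      = Matrix.trace (Wᵀ * X * (Xᵀ * X * (Xᵀ * X * (Xᵀ * X)))) := by
    rw [show (Xᵀ * X * (Xᵀ * X) * Wᵀ * (X * (Xᵀ * X)) : Matrix (Fin p) (Fin p) ℝ)
      = (Xᵀ * X * (Xᵀ * X)) * (Wᵀ * (X * (Xᵀ * X))) by simp only [Matrix.mul_assoc], rot]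
    congr 1; simp only [Matrix.mul_assoc]
  have a4 : Matrix.trace (Wᵀ * X * Xᵀ * (X * (Xᵀ * X)))
      = Matrix.trace (Wᵀ * X * (Xᵀ * X * (Xᵀ * X))) := by congr 1; simp only [Matrix.mul_assoc]
  have a5 : Matrix.trace (Xᵀ * W * Xᵀ * (X * (Xᵀ * X)))
      = Matrix.trace (Xᵀ * W * (Xᵀ * X * (Xᵀ * X))) := by congr 1; simp only [Matrix.mul_assoc]
  have a6 : Matrix.trace (Xᵀ * X * (Wᵀ * X) * Xᵀ * (X * (Xᵀ * X)))
      = Matrix.trace (Wᵀ * X * (Xᵀ * X * (Xᵀ * X * (Xᵀ * X)))) := by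
    rw [show (Xᵀ * X * (Wᵀ * X) * Xᵀ * (X * (Xᵀ * X)) : Matrix (Fin p) (Fin p) ℝ)
      = (Xᵀ * X) * (Wᵀ * X * (Xᵀ * X * (Xᵀ * X))) by simp only [Matrix.mul_assoc], rot]
    congr 1; simp only [Matrix.mul_assoc]
  have a7 : Matrix.trace (Xᵀ * X * (Xᵀ * W) * Xᵀ * (X * (Xᵀ * X)))
      = Matrix.trace (Xᵀ * W * (Xᵀ * X * (Xᵀ * X * (Xᵀ * X)))) := by
    rw [show (Xᵀ * X * (Xᵀ * W) * Xᵀ * (X * (Xᵀ * X)) : Matrix (Fin p) (Fin p) ℝ)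
      = (Xᵀ * X) * (Xᵀ * W * (Xᵀ * X * (Xᵀ * X))) by simp only [Matrix.mul_assoc], rot]
    congr 1; simp only [Matrix.mul_assoc]
  have a8 : Matrix.trace (Xᵀ * W * (Xᵀ * X) * Xᵀ * (X * (Xᵀ * X)))
      = Matrix.trace (Xᵀ * W * (Xᵀ * X * (Xᵀ * X * (Xᵀ * X)))) := by
    congr 1; simp only [Matrix.mul_assoc]
  have a9 : Matrix.trace (Wᵀ * X * (Xᵀ * X) * Xᵀ * (X * (Xᵀ * X)))
      = Matrix.trace (Wᵀ * X * (Xᵀ * X * (Xᵀ * X * (Xᵀ * X)))) := by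
    congr 1; simp only [Matrix.mul_assoc]
  have a11 : Matrix.trace (Xᵀ * X * Wᵀ * X)
      = Matrix.trace (Wᵀ * X * (Xᵀ * X)) := by
    rw [show (Xᵀ * X * Wᵀ * X : Matrix (Fin p) (Fin p) ℝ)
      = (Xᵀ * X) * (Wᵀ * X) by simp only [Matrix.mul_assoc], rot]
  have a12 : Matrix.trace (Xᵀ * X * (Xᵀ * X) * Wᵀ * X)
      = Matrix.trace (Wᵀ * X * (Xᵀ * X * (Xᵀ * X))) := by
    rw [show (Xᵀ * X * (Xᵀ * X) * Wᵀ * X : Matrix (Fin p) (Fin p) ℝ)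
      = (Xᵀ * X * (Xᵀ * X)) * (Wᵀ * X) by simp only [Matrix.mul_assoc], rot]
  have a13 : Matrix.trace (Wᵀ * X * Xᵀ * X)
      = Matrix.trace (Wᵀ * X * (Xᵀ * X)) := by congr 1; simp only [Matrix.mul_assoc]
  have a14 : Matrix.trace (Xᵀ * W * Xᵀ * X)
      = Matrix.trace (Xᵀ * W * (Xᵀ * X)) := by congr 1; simp only [Matrix.mul_assoc]
  have a15 : Matrix.trace (Xᵀ * X * (Wᵀ * X) * Xᵀ * X)
      = Matrix.trace (Wᵀ * X * (Xᵀ * X * (Xᵀ * X))) := by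
    rw [show (Xᵀ * X * (Wᵀ * X) * Xᵀ * X : Matrix (Fin p) (Fin p) ℝ)
      = (Xᵀ * X) * (Wᵀ * X * (Xᵀ * X)) by simp only [Matrix.mul_assoc], rot]
    congr 1; simp only [Matrix.mul_assoc]
  have a16 : Matrix.trace (Xᵀ * X * (Xᵀ * W) * Xᵀ * X)
      = Matrix.trace (Xᵀ * W * (Xᵀ * X * (Xᵀ * X))) := by
    rw [show (Xᵀ * X * (Xᵀ * W) * Xᵀ * X : Matrix (Fin p) (Fin p) ℝ)
      = (Xᵀ * X) * (Xᵀ * W * (Xᵀ * X)) by simp only [Matrix.mul_assoc], rot]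
    congr 1; simp only [Matrix.mul_assoc]
  have a17 : Matrix.trace (Xᵀ * W * (Xᵀ * X) * Xᵀ * X)
      = Matrix.trace (Xᵀ * W * (Xᵀ * X * (Xᵀ * X))) := by congr 1; simp only [Matrix.mul_assoc]
  have a18 : Matrix.trace (Wᵀ * X * (Xᵀ * X) * Xᵀ * X)
      = Matrix.trace (Wᵀ * X * (Xᵀ * X * (Xᵀ * X))) := by congr 1; simp only [Matrix.mul_assoc]
  rw [a1, a2, a3, a4, a5, a6, a7, a8, a9, a11, a12, a13, a14, a15, a16, a17, a18]
  have symM : ∀ M : Matrix (Fin p) (Fin p) ℝ, Mᵀ = M →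
      Matrix.trace (Wᵀ * X * M) = Matrix.trace (Xᵀ * W * M) := by
    intro M hM
    conv_lhs => rw [← trace_transpose]
    rw [transpose_mul, transpose_mul, transpose_transpose, hM]
    exact trace_mul_comm _ _
  have h1 : ((Xᵀ * X : Matrix (Fin p) (Fin p) ℝ))ᵀ = Xᵀ * X := by
    rw [transpose_mul, transpose_transpose]
  have h2 : ((Xᵀ * X * (Xᵀ * X) : Matrix (Fin p) (Fin p) ℝ))ᵀ = Xᵀ * X * (Xᵀ * X) := by
    rw [transpose_mul, h1]
  have h3 : ((Xᵀ * X * (Xᵀ * X * (Xᵀ * X)) : Matrix (Fin p) (Fin p) ℝ))ᵀ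
      = Xᵀ * X * (Xᵀ * X * (Xᵀ * X)) := by
    rw [transpose_mul, transpose_mul, h1]; simp only [Matrix.mul_assoc]
  have sym0 : Matrix.trace (Wᵀ * X) = Matrix.trace (Xᵀ * W) := by
    rw [← trace_transpose, transpose_mul, transpose_transpose, trace_mul_comm]
  rw [symM _ h1, symM _ h2, symM _ h3, sym0]
  ring
end

section
/- Let β > 0, M_1 ≥ 0, and 0 < r < β/(2β + 8M_1). Suppose X ∈ ℝ^{n×p} satisfies 0 < ‖X^T X - I_p‖_F ≤ r. If D = J_A(X)[W] + β X(X^T X - I_p) where ‖Φ(X^T W)‖_F ≤ 2 M_1 and ⟨J_A(X)[W], X(X^T X - I_p)⟩ = (15/8)⟨Φ(X^T W), (X^T X - I_p)^3⟩, then ‖D‖_F ≥ (β/4) ‖X^T X - I_p‖_F. -/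
open Matrix

/-- Frobenius norm of a real matrix. -/
noncomputable def frob {m n : ℕ} (X : Matrix (Fin m) (Fin n) ℝ) : ℝ :=
  Real.sqrt (∑ i, ∑ j, (X i j) ^ 2)

lemma frob_nonneg {m n : ℕ} (A : Matrix (Fin m) (Fin n) ℝ) : 0 ≤ frob A := Real.sqrt_nonneg _

lemma frob_sq {m n : ℕ} (A : Matrix (Fin m) (Fin n) ℝ) :
    frob A ^ 2 = Matrix.trace (Aᵀ * A) := by
  have h : (0:ℝ) ≤ ∑ i, ∑ j, (A i j)^2 := by positivity
  rw [frob, Real.sq_sqrt h, Matrix.trace]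
  simp only [Matrix.diag, Matrix.mul_apply, Matrix.transpose_apply, sq]
  exact Finset.sum_comm

lemma trace_le_frob_mul {m n : ℕ} (A B : Matrix (Fin m) (Fin n) ℝ) :
    Matrix.trace (Aᵀ * B) ≤ frob A * frob B := by
  have hA : frob A = Real.sqrt (∑ q : Fin m × Fin n, (A q.1 q.2)^2) := by
    rw [frob, Fintype.sum_prod_type]
  have hB : frob B = Real.sqrt (∑ q : Fin m × Fin n, (B q.1 q.2)^2) := by
    rw [frob, Fintype.sum_prod_type]
  have ht : Matrix.trace (Aᵀ * B) = ∑ q : Fin m × Fin n, A q.1 q.2 * B q.1 q.2 := by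
    rw [Fintype.sum_prod_type, Matrix.trace]
    simp only [Matrix.diag, Matrix.mul_apply, Matrix.transpose_apply]
    exact Finset.sum_comm
  rw [hA, hB, ht]
  exact Real.sum_mul_le_sqrt_mul_sqrt _ _ _

lemma neg_frob_mul_le_trace {m n : ℕ} (A B : Matrix (Fin m) (Fin n) ℝ) :
    -(frob A * frob B) ≤ Matrix.trace (Aᵀ * B) := by
  have h := trace_le_frob_mul (-A) B
  have hfn : frob (-A) = frob A := by simp [frob]
  rw [hfn, Matrix.transpose_neg, Matrix.neg_mul, Matrix.trace_neg] at h
  linarith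

lemma frob_mul_le {m n p : ℕ} (A : Matrix (Fin m) (Fin n) ℝ) (B : Matrix (Fin n) (Fin p) ℝ) :
    frob (A * B) ≤ frob A * frob B := by
  rw [frob, frob, frob, ← Real.sqrt_mul (by positivity)]
  apply Real.sqrt_le_sqrt
  calc ∑ i, ∑ j, ((A*B) i j)^2
      ≤ ∑ i, ∑ j, (∑ k, (A i k)^2) * (∑ k, (B k j)^2) := by
        apply Finset.sum_le_sum; intro i _; apply Finset.sum_le_sum; intro j _
        simpa [Matrix.mul_apply] using
          Finset.sum_mul_sq_le_sq_mul_sq Finset.univ (fun k => A i k) (fun k => B k j)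
    _ = (∑ i, ∑ k, (A i k)^2) * (∑ i, ∑ j, (B i j)^2) := by
        simp_rw [← Finset.mul_sum]
        rw [← Finset.sum_mul]
        congr 1
        exact Finset.sum_comm


lemma key_arith (β M₁ r e t3 tΦ f fD : ℝ)
    (hβ : 0 < β) (hM₁ : 0 ≤ M₁) (hr : 0 < r) (hrc : r * (2 * β + 8 * M₁) < β)
    (he0 : 0 < e) (her : e ≤ r)
    (ht3l : -(e * (e * e)) ≤ t3) (ht3u : t3 ≤ e * (e * e))
    (hΦl : -(2 * M₁ * (e * e * e)) ≤ tΦ)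
    (hf2 : f ^ 2 = t3 + e ^ 2)
    (hfD0 : 0 ≤ fD) (hf0 : 0 ≤ f)
    (hCS : (15 / 8 : ℝ) * tΦ + β * f ^ 2 ≤ fD * f) :
    fD ≥ (β / 4) * e := by
  have hr1 : r < 1 / 2 := by nlinarith
  have hfub : f ≤ 2 * e := by nlinarith [sq_nonneg (f - 2 * e), sq_nonneg (f + 2 * e)]
  have hlow : (β / 2) * e ^ 2 ≤ (15 / 8 : ℝ) * tΦ + β * f ^ 2 := by
    nlinarith [mul_le_mul_of_nonneg_right hrc.le (sq_nonneg e),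
      mul_nonneg (mul_nonneg hβ.le (sub_nonneg.2 her)) (sq_nonneg e),
      mul_nonneg (mul_nonneg hM₁ (sub_nonneg.2 her)) (sq_nonneg e)]
  have h1 : (β / 2) * e ^ 2 ≤ fD * (2 * e) := by
    have : fD * f ≤ fD * (2 * e) := mul_le_mul_of_nonneg_left hfub hfD0
    linarith
  nlinarith

theorem stmt_14 {n p : ℕ} (β M₁ r : ℝ) (hβ : 0 < β) (hM₁ : 0 ≤ M₁)
    (hr : 0 < r) (hr' : r < β / (2 * β + 8 * M₁))
    (X W D : Matrix (Fin n) (Fin p) ℝ)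
    (hfeas : 0 < frob (Xᵀ * X - 1)) (hfeas' : frob (Xᵀ * X - 1) ≤ r)
    (hW : frob (symPart (Xᵀ * W)) ≤ 2 * M₁)
    (hinner : Matrix.trace ((cdJac X W)ᵀ * (X * (Xᵀ * X - 1))) =
      (15 / 8 : ℝ) * Matrix.trace ((symPart (Xᵀ * W))ᵀ * (Xᵀ * X - 1) ^ 3))
    (hD : D = cdJac X W + β • (X * (Xᵀ * X - 1))) :
    frob D ≥ (β / 4) * frob (Xᵀ * X - 1) := by
  set E : Matrix (Fin p) (Fin p) ℝ := Xᵀ * X - 1 with hEdef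
  set e : ℝ := frob E with he
  have hrc : r * (2 * β + 8 * M₁) < β := (lt_div_iff₀ (by positivity)).mp hr'
  have hEt : Eᵀ = E := by
    rw [hEdef]
    simp [Matrix.transpose_sub, Matrix.transpose_mul]
  have hXX : Xᵀ * X = E + 1 := by rw [hEdef]; abel
  have he0 : 0 < e := hfeas
  have her : e ≤ r := hfeas'
  -- trace identities
  have htr2 : e ^ 2 = Matrix.trace (E * E) := by rw [he, frob_sq, hEt]
  have hEE : frob (E * E) ≤ e * e := frob_mul_le E E
  have hEEE : frob (E * E * E) ≤ e * (e * e) := by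
    have h1 := frob_mul_le (E * E) E
    have h2 : frob (E * E) * frob E ≤ (e * e) * e :=
      mul_le_mul_of_nonneg_right hEE (frob_nonneg E)
    calc frob (E * E * E) ≤ frob (E * E) * frob E := h1
      _ ≤ (e * e) * e := h2
      _ = e * (e * e) := by ring
  have hE3low : -(e * (e * e)) ≤ Matrix.trace (E * E * E) := by
    have h := neg_frob_mul_le_trace E (E * E)
    rw [hEt, ← Matrix.mul_assoc] at h
    have : -(e * (e * e)) ≤ -(frob E * frob (E * E)) := by
      have := mul_le_mul_of_nonneg_left hEE (frob_nonneg E)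
      simp only [← he] at this ⊢
      linarith
    linarith
  have hE3up : Matrix.trace (E * E * E) ≤ e * (e * e) := by
    have h := trace_le_frob_mul E (E * E)
    rw [hEt, ← Matrix.mul_assoc] at h
    have : frob E * frob (E * E) ≤ e * (e * e) := by
      have := mul_le_mul_of_nonneg_left hEE (frob_nonneg E)
      simp only [← he] at this ⊢
      linarith
    linarith
  have hXE : frob (X * E) ^ 2 = Matrix.trace (E * E * E) + e ^ 2 := by
    rw [frob_sq]
    have hkey : (X * E)ᵀ * (X * E) = E * E * E + E * E := by
      rw [Matrix.transpose_mul, hEt, Matrix.mul_assoc, ← Matrix.mul_assoc Xᵀ X E, hXX]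
      noncomm_ring
    rw [hkey, Matrix.trace_add, htr2]
  have hpow3 : E ^ 3 = E * E * E := by rw [pow_succ, pow_two]
  have hΦ : -(2 * M₁ * (e * e * e)) ≤ Matrix.trace ((symPart (Xᵀ * W))ᵀ * E ^ 3) := by
    rw [hpow3]
    have h := neg_frob_mul_le_trace (symPart (Xᵀ * W)) (E * E * E)
    have h2 : frob (symPart (Xᵀ * W)) * frob (E * E * E) ≤ (2 * M₁) * (e * (e * e)) := by
      apply mul_le_mul hW hEEE (frob_nonneg _)
      linarith [frob_nonneg (symPart (Xᵀ * W)), hW]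
    calc -(2 * M₁ * (e * e * e)) = -((2 * M₁) * (e * (e * e))) := by ring
      _ ≤ -(frob (symPart (Xᵀ * W)) * frob (E * E * E)) := by linarith
      _ ≤ _ := h
  have hDtr : Matrix.trace (Dᵀ * (X * E)) =
      (15 / 8 : ℝ) * Matrix.trace ((symPart (Xᵀ * W))ᵀ * E ^ 3) + β * frob (X * E) ^ 2 := by
    rw [hD, Matrix.transpose_add, Matrix.transpose_smul, Matrix.add_mul, Matrix.smul_mul,
      Matrix.trace_add, Matrix.trace_smul, hinner, frob_sq]
    simp [smul_eq_mul]
  have hCS : Matrix.trace (Dᵀ * (X * E)) ≤ frob D * frob (X * E) := trace_le_frob_mul D (X * E)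
  exact key_arith β M₁ r e (Matrix.trace (E * E * E))
    (Matrix.trace ((symPart (Xᵀ * W))ᵀ * E ^ 3)) (frob (X * E)) (frob D)
    hβ hM₁ hr hrc he0 her hE3low hE3up hΦ hXE (frob_nonneg D) (frob_nonneg (X * E))
    (by rw [← hDtr]; exact hCS)
end
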